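/- Fix an integer n ≥ 1, and let G''ₙ be the group with generators a, b, c, d and relators ⁅a,c⁆, ⁅a,d⁆, ⁅b,c⁆, ⁅b,d⁆, ⁅a,b⁆·⁅c,d⁆, ⁅a,b⁆ⁿ and ⁅c,d⁆ⁿ. Then the assignments a ↦ (A,1), b ↦ (B,1), c ↦ (1,A), d ↦ (1,B) define a surjective group homomorphism φ from G''ₙ onto the finite group Qₙ = (H(ℤ/nℤ) × H(ℤ/nℤ))/Δ, where Δ = {(Z^k, Z^k) : k ∈ ℤ} is the diagonal copy of the common center, and the image φ(⁅a,b⁆) has order exactly n in Qₙ; in particular ⁅a,b⁆ has order exactly n in G''ₙ. -/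

import Mathlib

/-- The Heisenberg group over a commutative ring `R`: `3 × 3` upper triangular matrices
over `R` with all diagonal entries equal to `1`. -/
def Heisenberg (R : Type) [CommRing R] : Type :=
  {M : Matrix (Fin 3) (Fin 3) R //
    M 0 0 = 1 ∧ M 1 1 = 1 ∧ M 2 2 = 1 ∧ M 1 0 = 0 ∧ M 2 0 = 0 ∧ M 2 1 = 0}

namespace Heisenberg

variable {R : Type} [CommRing R]

instance : Mul (Heisenberg R) :=
  ⟨fun M N => ⟨M.1 * N.1, by
    obtain ⟨m1, m2, m3, m4, m5, m6⟩ := M.2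
    obtain ⟨n1, n2, n3, n4, n5, n6⟩ := N.2
    refine ⟨?_, ?_, ?_, ?_, ?_, ?_⟩ <;>
      simp [Matrix.mul_apply, Fin.sum_univ_three, m1, m2, m3, m4, m5, m6,
        n1, n2, n3, n4, n5, n6]⟩⟩

instance : One (Heisenberg R) := ⟨⟨1, by simp⟩⟩

instance : Inv (Heisenberg R) :=
  ⟨fun M => ⟨!![1, -M.1 0 1, M.1 0 1 * M.1 1 2 - M.1 0 2; 0, 1, -M.1 1 2; 0, 0, 1],
    ⟨rfl, rfl, rfl, rfl, rfl, rfl⟩⟩⟩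

theorem mul_val (M N : Heisenberg R) : (M * N).1 = M.1 * N.1 := rfl
theorem one_val : (1 : Heisenberg R).1 = 1 := rfl
theorem inv_val (M : Heisenberg R) :
    (M⁻¹).1 = !![1, -M.1 0 1, M.1 0 1 * M.1 1 2 - M.1 0 2; 0, 1, -M.1 1 2; 0, 0, 1] := rfl

instance : Group (Heisenberg R) where
  mul_assoc M N P := Subtype.ext (by rw [mul_val, mul_val, mul_val, mul_val, mul_assoc])
  one_mul M := Subtype.ext (by rw [mul_val, one_val, one_mul])
  mul_one M := Subtype.ext (by rw [mul_val, one_val, mul_one])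
  inv_mul_cancel M := by
    obtain ⟨m1, m2, m3, m4, m5, m6⟩ := M.2
    apply Subtype.ext
    rw [mul_val, inv_val, one_val]
    ext i j
    fin_cases i <;> fin_cases j <;>
      simp [Matrix.mul_apply, Fin.sum_univ_three, Matrix.one_apply,
        m1, m2, m3, m4, m5, m6] <;>
      ring

/-- The elementary unitriangular matrix with a `1` in position `(1,2)`. -/
def A : Heisenberg R := ⟨!![1, 1, 0; 0, 1, 0; 0, 0, 1], ⟨rfl, rfl, rfl, rfl, rfl, rfl⟩⟩

/-- The elementary unitriangular matrix with a `1` in position `(2,3)`. -/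
def B : Heisenberg R := ⟨!![1, 0, 0; 0, 1, 1; 0, 0, 1], ⟨rfl, rfl, rfl, rfl, rfl, rfl⟩⟩

/-- The generator of the center: the unitriangular matrix with a `1` in position `(1,3)`. -/
def Z : Heisenberg R := ⟨!![1, 0, 1; 0, 1, 0; 0, 0, 1], ⟨rfl, rfl, rfl, rfl, rfl, rfl⟩⟩

theorem Z_mem_center : (Z : Heisenberg R) ∈ Subgroup.center (Heisenberg R) := by
  rw [Subgroup.mem_center_iff]
  intro M
  obtain ⟨m1, m2, m3, m4, m5, m6⟩ := M.2
  apply Subtype.ext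
  rw [mul_val, mul_val]
  ext i j
  fin_cases i <;> fin_cases j <;>
    simp [Z, Matrix.mul_apply, Fin.sum_univ_three, Matrix.vecHead, Matrix.vecTail,
      m1, m2, m3, m4, m5, m6] <;> ring

end Heisenberg

open Heisenberg in
/-- The diagonal copy `Δ = {(Zᵏ, Zᵏ) : k ∈ ℤ}` of the common center in `H(R) × H(R)`. -/
def HeisDiag (R : Type) [CommRing R] : Subgroup (Heisenberg R × Heisenberg R) :=
  Subgroup.zpowers (Z, Z)

instance (R : Type) [CommRing R] : (HeisDiag R).Normal := by
  have h1 : ∀ x : Heisenberg R × Heisenberg R, Commute x (Heisenberg.Z, Heisenberg.Z) := by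
    intro x
    have hz := Subgroup.mem_center_iff.mp (Heisenberg.Z_mem_center (R := R))
    exact Prod.ext (hz x.1) (hz x.2)
  constructor
  intro m hm g
  obtain ⟨k, rfl⟩ := Subgroup.mem_zpowers_iff.mp hm
  rw [((h1 g).zpow_right k).eq, mul_assoc, mul_inv_cancel, mul_one]
  exact ⟨k, rfl⟩

open scoped commutatorElement

/-- Generators `a`, `b`, `c`, `d`. -/
def ga : FreeGroup (Fin 4) := FreeGroup.of 0
def gb : FreeGroup (Fin 4) := FreeGroup.of 1
def gc : FreeGroup (Fin 4) := FreeGroup.of 2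
def gd : FreeGroup (Fin 4) := FreeGroup.of 3

/-- Relators of
`G''ₙ = ⟨a,b,c,d | ⁅a,c⁆, ⁅a,d⁆, ⁅b,c⁆, ⁅b,d⁆, ⁅a,b⁆·⁅c,d⁆, ⁅a,b⁆ⁿ, ⁅c,d⁆ⁿ⟩`. -/
def G''nrels (n : ℕ) : Set (FreeGroup (Fin 4)) :=
  {⁅ga, gc⁆, ⁅ga, gd⁆, ⁅gb, gc⁆, ⁅gb, gd⁆, ⁅ga, gb⁆ * ⁅gc, gd⁆, ⁅ga, gb⁆ ^ n, ⁅gc, gd⁆ ^ n}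


section Aux
open Heisenberg

set_option linter.unnecessarySeqFocus false

theorem Heisenberg.A_pow {R : Type} [CommRing R] (k : ℕ) :
    ((A : Heisenberg R) ^ k).1 = !![1,(k:R),0;0,1,0;0,0,1] := by
  induction k with
  | zero =>
    rw [pow_zero, one_val]
    ext i j
    fin_cases i <;> fin_cases j <;>
      simp [Matrix.one_apply, Matrix.vecHead, Matrix.vecTail]
  | succ k ih =>
    rw [pow_succ, mul_val, ih]
    ext i j
    fin_cases i <;> fin_cases j <;>
      simp [A, Matrix.mul_apply, Fin.sum_univ_three, Matrix.vecHead, Matrix.vecTail] <;>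
      ring

theorem Heisenberg.B_pow {R : Type} [CommRing R] (k : ℕ) :
    ((B : Heisenberg R) ^ k).1 = !![1,0,0;0,1,(k:R);0,0,1] := by
  induction k with
  | zero =>
    rw [pow_zero, one_val]
    ext i j
    fin_cases i <;> fin_cases j <;>
      simp [Matrix.one_apply, Matrix.vecHead, Matrix.vecTail]
  | succ k ih =>
    rw [pow_succ, mul_val, ih]
    ext i j
    fin_cases i <;> fin_cases j <;>
      simp [B, Matrix.mul_apply, Fin.sum_univ_three, Matrix.vecHead, Matrix.vecTail] <;>
      ring

theorem Heisenberg.Z_pow {R : Type} [CommRing R] (k : ℕ) :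
    ((Z : Heisenberg R) ^ k).1 = !![1,0,(k:R);0,1,0;0,0,1] := by
  induction k with
  | zero =>
    rw [pow_zero, one_val]
    ext i j
    fin_cases i <;> fin_cases j <;>
      simp [Matrix.one_apply, Matrix.vecHead, Matrix.vecTail]
  | succ k ih =>
    rw [pow_succ, mul_val, ih]
    ext i j
    fin_cases i <;> fin_cases j <;>
      simp [Z, Matrix.mul_apply, Fin.sum_univ_three, Matrix.vecHead, Matrix.vecTail] <;>
      ring

theorem Heisenberg.commAB {R : Type} [CommRing R] : ⁅(A : Heisenberg R), (B : Heisenberg R)⁆ = (Z : Heisenberg R) := by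
  apply Subtype.ext
  rw [commutatorElement_def, mul_val, mul_val, mul_val, inv_val, inv_val]
  ext i j
  fin_cases i <;> fin_cases j <;>
    simp [A, B, Z, Matrix.mul_apply, Fin.sum_univ_three, Matrix.vecHead, Matrix.vecTail] <;>
    ring

theorem Heisenberg.Z_pow_eq_one_iff (n : ℕ) (k : ℕ) :
    (Z : Heisenberg (ZMod n)) ^ k = 1 ↔ n ∣ k := by
  constructor
  · intro h
    have h2 := congrArg (fun M : Heisenberg (ZMod n) => M.1 0 2) h
    simp only [Z_pow, one_val] at h2
    simp [Matrix.one_apply, Matrix.vecHead, Matrix.vecTail] at h2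
    exact (ZMod.natCast_eq_zero_iff k n).mp h2
  · rintro ⟨m, rfl⟩
    apply Subtype.ext
    rw [Z_pow, one_val]
    ext i j
    fin_cases i <;> fin_cases j <;>
      simp [Matrix.one_apply, Matrix.vecHead, Matrix.vecTail, ZMod.natCast_self]

theorem Heisenberg.decomp (n : ℕ) [NeZero n] (M : Heisenberg (ZMod n)) :
    M = A ^ (M.1 0 1).val * B ^ (M.1 1 2).val *
      Z ^ ((M.1 0 2 - M.1 0 1 * M.1 1 2).val) := by
  obtain ⟨m1, m2, m3, m4, m5, m6⟩ := M.2
  apply Subtype.ext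
  rw [mul_val, mul_val, A_pow, B_pow, Z_pow]
  ext i j
  fin_cases i <;> fin_cases j <;>
    simp [Matrix.mul_apply, Fin.sum_univ_three, Matrix.vecHead, Matrix.vecTail,
      ZMod.natCast_val, ZMod.cast_id, m1, m2, m3, m4, m5, m6] <;>
    ring

end Aux

open Heisenberg in
/-- For `n ≥ 1`, the assignments `a ↦ (A,1)`, `b ↦ (B,1)`, `c ↦ (1,A)`, `d ↦ (1,B)` define a
surjective homomorphism `φ` from `G''ₙ` onto `Qₙ = (H(ℤ/nℤ) × H(ℤ/nℤ))/Δ`, and the image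
`φ(⁅a,b⁆)` has order exactly `n` in `Qₙ`; in particular `⁅a,b⁆` has order exactly `n`
in `G''ₙ`. -/
theorem G''n_maps_onto_Qn (n : ℕ) (hn : 1 ≤ n) :
    ∃ φ : PresentedGroup (G''nrels n) →*
        (Heisenberg (ZMod n) × Heisenberg (ZMod n)) ⧸ HeisDiag (ZMod n),
      Function.Surjective φ ∧
      φ (PresentedGroup.of 0) = QuotientGroup.mk (A, 1) ∧
      φ (PresentedGroup.of 1) = QuotientGroup.mk (B, 1) ∧
      φ (PresentedGroup.of 2) = QuotientGroup.mk (1, A) ∧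
      φ (PresentedGroup.of 3) = QuotientGroup.mk (1, B) ∧
      orderOf (φ ⁅(PresentedGroup.of 0 : PresentedGroup (G''nrels n)),
        (PresentedGroup.of 1 : PresentedGroup (G''nrels n))⁆) = n ∧
      orderOf ⁅(PresentedGroup.of 0 : PresentedGroup (G''nrels n)),
        (PresentedGroup.of 1 : PresentedGroup (G''nrels n))⁆ = n := by
  haveI : NeZero n := ⟨by omega⟩
  set H := Heisenberg (ZMod n) with hH
  set Hp := H × H with hHp
  set Q := Hp ⧸ HeisDiag (ZMod n) with hQ
  let f : Fin 4 → Q :=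
    ![QuotientGroup.mk (A, 1), QuotientGroup.mk (B, 1),
      QuotientGroup.mk (1, A), QuotientGroup.mk (1, B)]
  -- commutator of mk's
  have mkc : ∀ a b : Hp, ⁅(QuotientGroup.mk a : Q), QuotientGroup.mk b⁆ =
      (QuotientGroup.mk ⁅a, b⁆ : Q) := by
    intro a b
    rw [commutatorElement_def, commutatorElement_def, QuotientGroup.mk_mul,
      QuotientGroup.mk_mul, QuotientGroup.mk_mul, QuotientGroup.mk_inv,
      QuotientGroup.mk_inv]
  have cross : ∀ x y : H, ⁅((x, 1) : Hp), ((1, y) : Hp)⁆ = 1 := by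
    intro x y
    simp [commutatorElement_def, Prod.ext_iff]
  have c1 : ∀ x y : H, ⁅((x, 1) : Hp), ((y, 1) : Hp)⁆ = (⁅x, y⁆, 1) := by
    intro x y
    simp [commutatorElement_def, Prod.ext_iff]
  have c2 : ∀ x y : H, ⁅((1, x) : Hp), ((1, y) : Hp)⁆ = (1, ⁅x, y⁆) := by
    intro x y
    simp [commutatorElement_def, Prod.ext_iff]
  have hZn : (Z : H) ^ n = 1 := (Heisenberg.Z_pow_eq_one_iff n n).mpr dvd_rfl
  have hpowfst : ∀ (x : H) (k : ℕ), ((x, 1) : Hp) ^ k = (x ^ k, 1) := by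
    intro x k
    simp [Prod.ext_iff]
  have hpowsnd : ∀ (x : H) (k : ℕ), ((1, x) : Hp) ^ k = (1, x ^ k) := by
    intro x k
    simp [Prod.ext_iff]
  have hZZ : ((Z, Z) : Hp) ∈ HeisDiag (ZMod n) := ⟨1, by simp⟩
  -- relators die
  have hrel : ∀ r ∈ G''nrels n, FreeGroup.lift f r = 1 := by
    intro r hr
    simp only [G''nrels, Set.mem_insert_iff, Set.mem_singleton_iff] at hr
    rcases hr with rfl | rfl | rfl | rfl | rfl | rfl | rfl
    · rw [map_commutatorElement]
      simp only [ga, gc, FreeGroup.lift_apply_of]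
      show ⁅f 0, f 2⁆ = 1
      rw [show f 0 = QuotientGroup.mk ((A, 1) : Hp) from rfl,
        show f 2 = QuotientGroup.mk ((1, A) : Hp) from rfl, mkc, cross]
      rfl
    · rw [map_commutatorElement]
      simp only [ga, gd, FreeGroup.lift_apply_of]
      show ⁅f 0, f 3⁆ = 1
      rw [show f 0 = QuotientGroup.mk ((A, 1) : Hp) from rfl,
        show f 3 = QuotientGroup.mk ((1, B) : Hp) from rfl, mkc, cross]
      rfl
    · rw [map_commutatorElement]
      simp only [gb, gc, FreeGroup.lift_apply_of]
      show ⁅f 1, f 2⁆ = 1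
      rw [show f 1 = QuotientGroup.mk ((B, 1) : Hp) from rfl,
        show f 2 = QuotientGroup.mk ((1, A) : Hp) from rfl, mkc, cross]
      rfl
    · rw [map_commutatorElement]
      simp only [gb, gd, FreeGroup.lift_apply_of]
      show ⁅f 1, f 3⁆ = 1
      rw [show f 1 = QuotientGroup.mk ((B, 1) : Hp) from rfl,
        show f 3 = QuotientGroup.mk ((1, B) : Hp) from rfl, mkc, cross]
      rfl
    · rw [map_mul, map_commutatorElement, map_commutatorElement]
      simp only [ga, gb, gc, gd, FreeGroup.lift_apply_of]
      show ⁅f 0, f 1⁆ * ⁅f 2, f 3⁆ = 1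
      rw [show f 0 = QuotientGroup.mk ((A, 1) : Hp) from rfl,
        show f 1 = QuotientGroup.mk ((B, 1) : Hp) from rfl,
        show f 2 = QuotientGroup.mk ((1, A) : Hp) from rfl,
        show f 3 = QuotientGroup.mk ((1, B) : Hp) from rfl, mkc, mkc, c1, c2,
        Heisenberg.commAB]
      show QuotientGroup.mk (((Z, 1) : Hp) * (1, Z)) = 1
      rw [show (((Z, 1) : Hp) * (1, Z)) = (Z, Z) by simp [Prod.ext_iff]]
      exact (QuotientGroup.eq_one_iff _).mpr hZZ
    · rw [map_pow, map_commutatorElement]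
      simp only [ga, gb, FreeGroup.lift_apply_of]
      show ⁅f 0, f 1⁆ ^ n = 1
      rw [show f 0 = QuotientGroup.mk ((A, 1) : Hp) from rfl,
        show f 1 = QuotientGroup.mk ((B, 1) : Hp) from rfl, mkc, c1,
        Heisenberg.commAB]
      show QuotientGroup.mk ((((Z, 1) : Hp)) ^ n) = 1
      rw [hpowfst, hZn]
      rfl
    · rw [map_pow, map_commutatorElement]
      simp only [gc, gd, FreeGroup.lift_apply_of]
      show ⁅f 2, f 3⁆ ^ n = 1
      rw [show f 2 = QuotientGroup.mk ((1, A) : Hp) from rfl,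
        show f 3 = QuotientGroup.mk ((1, B) : Hp) from rfl, mkc, c2,
        Heisenberg.commAB]
      show QuotientGroup.mk ((((1, Z) : Hp)) ^ n) = 1
      rw [hpowsnd, hZn]
      rfl
  let φ := PresentedGroup.toGroup hrel
  have hof : ∀ i : Fin 4, φ (PresentedGroup.of i) = f i := fun i =>
    PresentedGroup.toGroup.of hrel
  -- surjectivity
  have hZ1mem : ∀ (S : Subgroup Q),
      (QuotientGroup.mk ((A, 1) : Hp) : Q) ∈ S →
      (QuotientGroup.mk ((B, 1) : Hp) : Q) ∈ S →
      (QuotientGroup.mk ((Z, 1) : Hp) : Q) ∈ S := by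
    intro S hA1 hB1
    have : (QuotientGroup.mk ((Z, 1) : Hp) : Q) =
        ⁅(QuotientGroup.mk ((A, 1) : Hp) : Q), QuotientGroup.mk ((B, 1) : Hp)⁆ := by
      rw [mkc, c1, Heisenberg.commAB]
    rw [this, commutatorElement_def]
    exact S.mul_mem (S.mul_mem (S.mul_mem hA1 hB1) (S.inv_mem hA1)) (S.inv_mem hB1)
  have h1Zmem : ∀ (S : Subgroup Q),
      (QuotientGroup.mk ((1, A) : Hp) : Q) ∈ S →
      (QuotientGroup.mk ((1, B) : Hp) : Q) ∈ S →
      (QuotientGroup.mk ((1, Z) : Hp) : Q) ∈ S := by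
    intro S h1A h1B
    have : (QuotientGroup.mk ((1, Z) : Hp) : Q) =
        ⁅(QuotientGroup.mk ((1, A) : Hp) : Q), QuotientGroup.mk ((1, B) : Hp)⁆ := by
      rw [mkc, c2, Heisenberg.commAB]
    rw [this, commutatorElement_def]
    exact S.mul_mem (S.mul_mem (S.mul_mem h1A h1B) (S.inv_mem h1A)) (S.inv_mem h1B)
  have hsurj : Function.Surjective φ := by
    have hA1 : (QuotientGroup.mk ((A, 1) : Hp) : Q) ∈ φ.range := ⟨_, hof 0⟩
    have hB1 : (QuotientGroup.mk ((B, 1) : Hp) : Q) ∈ φ.range := ⟨_, hof 1⟩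
    have h1A : (QuotientGroup.mk ((1, A) : Hp) : Q) ∈ φ.range := ⟨_, hof 2⟩
    have h1B : (QuotientGroup.mk ((1, B) : Hp) : Q) ∈ φ.range := ⟨_, hof 3⟩
    have hfst : ∀ x : H, (QuotientGroup.mk ((x, 1) : Hp) : Q) ∈ φ.range := by
      intro x
      obtain ⟨p, q_, r, hx⟩ : ∃ p q_ r : ℕ, x = A ^ p * B ^ q_ * Z ^ r :=
        ⟨_, _, _, Heisenberg.decomp n x⟩
      have hsplit : ((x, 1) : Hp) = (A, 1) ^ p * (B, 1) ^ q_ * (Z, 1) ^ r := by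
        rw [hx, hpowfst, hpowfst, hpowfst]
        simp [Prod.ext_iff]
      rw [hsplit, QuotientGroup.mk_mul, QuotientGroup.mk_mul, QuotientGroup.mk_pow,
        QuotientGroup.mk_pow, QuotientGroup.mk_pow]
      exact mul_mem (mul_mem (pow_mem hA1 p) (pow_mem hB1 q_))
        (pow_mem (hZ1mem _ hA1 hB1) r)
    have hsnd : ∀ x : H, (QuotientGroup.mk ((1, x) : Hp) : Q) ∈ φ.range := by
      intro x
      obtain ⟨p, q_, r, hx⟩ : ∃ p q_ r : ℕ, x = A ^ p * B ^ q_ * Z ^ r :=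
        ⟨_, _, _, Heisenberg.decomp n x⟩
      have hsplit : ((1, x) : Hp) = (1, A) ^ p * (1, B) ^ q_ * (1, Z) ^ r := by
        rw [hx, hpowsnd, hpowsnd, hpowsnd]
        simp [Prod.ext_iff]
      rw [hsplit, QuotientGroup.mk_mul, QuotientGroup.mk_mul, QuotientGroup.mk_pow,
        QuotientGroup.mk_pow, QuotientGroup.mk_pow]
      exact mul_mem (mul_mem (pow_mem h1A p) (pow_mem h1B q_))
        (pow_mem (h1Zmem _ h1A h1B) r)
    intro q
    obtain ⟨x, rfl⟩ := QuotientGroup.mk_surjective q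
    have hx : ((x.1, x.2) : Hp) = (x.1, 1) * (1, x.2) := by simp [Prod.ext_iff]
    have : (QuotientGroup.mk x : Q) ∈ φ.range := by
      rw [show x = (x.1, x.2) from rfl, hx, QuotientGroup.mk_mul]
      exact mul_mem (hfst x.1) (hsnd x.2)
    exact this
  -- order computations
  have hφcomm : φ ⁅(PresentedGroup.of 0 : PresentedGroup (G''nrels n)),
      (PresentedGroup.of 1 : PresentedGroup (G''nrels n))⁆ =
      QuotientGroup.mk ((Z, 1) : Hp) := by
    rw [map_commutatorElement, hof 0, hof 1]
    rw [show f 0 = QuotientGroup.mk ((A, 1) : Hp) from rfl,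
      show f 1 = QuotientGroup.mk ((B, 1) : Hp) from rfl, mkc, c1, Heisenberg.commAB]
  have hordZ1 : orderOf (QuotientGroup.mk ((Z, 1) : Hp) : Q) = n := by
    rw [orderOf_eq_iff (by omega : 0 < n)]
    constructor
    · rw [← QuotientGroup.mk_pow, hpowfst, hZn]
      rfl
    · intro m hmn hm hcon
      rw [← QuotientGroup.mk_pow, hpowfst] at hcon
      have hmem := (QuotientGroup.eq_one_iff _).mp hcon
      obtain ⟨k, hk⟩ := hmem
      simp only at hk
      rw [show ((Z, Z) : Hp) ^ k = ((Z : H) ^ k, (Z : H) ^ k) from rfl] at hk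
      have hk1 := congrArg Prod.fst hk
      have hk2 := congrArg Prod.snd hk
      simp only at hk1 hk2
      have hZm : (Z : H) ^ m = 1 := by
        rw [← hk1, hk2]
      have hle := Nat.le_of_dvd hm ((Heisenberg.Z_pow_eq_one_iff n m).mp hZm)
      omega
  -- order of the commutator in the presented group
  have hpowrel : (⁅(PresentedGroup.of 0 : PresentedGroup (G''nrels n)),
      (PresentedGroup.of 1 : PresentedGroup (G''nrels n))⁆) ^ n = 1 := by
    have hmem : ⁅ga, gb⁆ ^ n ∈ G''nrels n := by
      simp [G''nrels]
    have : (⁅(PresentedGroup.of 0 : PresentedGroup (G''nrels n)),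
        (PresentedGroup.of 1 : PresentedGroup (G''nrels n))⁆) ^ n =
        QuotientGroup.mk (⁅ga, gb⁆ ^ n) := rfl
    rw [this]
    exact (QuotientGroup.eq_one_iff _).mpr (Subgroup.subset_normalClosure hmem)
  have hdvd1 : orderOf (⁅(PresentedGroup.of 0 : PresentedGroup (G''nrels n)),
      (PresentedGroup.of 1 : PresentedGroup (G''nrels n))⁆) ∣ n :=
    orderOf_dvd_of_pow_eq_one hpowrel
  have hdvd2 : n ∣ orderOf (⁅(PresentedGroup.of 0 : PresentedGroup (G''nrels n)),
      (PresentedGroup.of 1 : PresentedGroup (G''nrels n))⁆) := by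
    have := orderOf_map_dvd φ (⁅(PresentedGroup.of 0 : PresentedGroup (G''nrels n)),
      (PresentedGroup.of 1 : PresentedGroup (G''nrels n))⁆)
    rw [hφcomm, hordZ1] at this
    exact this
  refine ⟨φ, hsurj, hof 0, hof 1, hof 2, hof 3, ?_, Nat.dvd_antisymm hdvd1 hdvd2⟩
  rw [hφcomm, hordZ1]
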